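/- For every k ≥ 1: the map T^{S(k−1)} is injective on D_k; T^{S(k−1)}(D_k) = D_{k−1} ∪ D_{k+1} with D_{k−1} ∩ D_{k+1} = {0}; hence λ^{S(k−1)} |D_k| = |D_{k−1}| + |D_{k+1}|. Equivalently, setting ν_k := |D_k|/|D_{k+1}|, one has λ^{S(k−1)} = ν_{k−1} + 1/ν_k. -/

import Mathlib

open MeasureTheory Filter Set

noncomputable def intervalLength (A : Set ℝ) : ℝ := (MeasureTheory.volume A).toReal

private lemma betw_aux (s x t p : ℝ) (hx : x ∈ Set.uIcc 0 t) (h0 : 0 ≤ p)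
    (h1 : 0 ≤ p + s * t) : 0 ≤ p + s * x := by
  rcases Set.mem_uIcc.mp hx with ⟨hx0, hxt⟩ | ⟨htx, hx0⟩
  · rcases le_total 0 s with hs | hs
    · nlinarith
    · nlinarith
  · rcases le_total 0 s with hs | hs
    · nlinarith
    · nlinarith

private lemma betw_aux' (s x t p : ℝ) (hx : x ∈ Set.uIcc 0 t) (h0 : p ≤ 0)
    (h1 : p + s * t ≤ 0) : p + s * x ≤ 0 := by
  have := betw_aux (-s) x t (-p) hx (by linarith) (by linarith)
  linarith

theorem image_of_Dk_under_fibonacci_iterate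
    (lam : ℝ) (hlam1 : 1 < lam) (hlam2 : lam ≤ 2)
    (T : ℝ → ℝ) (hT : ∀ x : ℝ, T x = lam * (1 - |x|) - 1)
    (c : ℕ → ℝ) (hc : ∀ i : ℕ, c i = T^[i] 0)
    (S : ℤ → ℕ) (hSm2 : S (-2) = 0) (hSm1 : S (-1) = 1)
    (hSrec : ∀ k : ℤ, 0 ≤ k → S k = S (k - 1) + S (k - 2))
    (hcne : ∀ j : ℕ, 1 ≤ j → c j ≠ 0)
    (hc2neg : c 2 < 0) (hc1pos : 0 < c 1)
    (hsame : ∀ k : ℤ, 2 ≤ k → ∀ j : ℕ, 1 ≤ j → j < S (k - 2) →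
      (0 < c (S (k - 1) + j) ↔ 0 < c j))
    (hopp : ∀ k : ℤ, 2 ≤ k → (0 < c (S k) ↔ c (S (k - 2)) < 0))
    (hdec : ∀ k : ℤ, 0 ≤ k → |c (S (k + 1))| < |c (S k)|)
    (hc34 : |c 3| < |c 4|)
    (D : ℤ → Set ℝ) (hDdef : ∀ k : ℤ, D k = Set.uIcc 0 (c (S k))) :
    ∀ k : ℤ, 1 ≤ k →
      Set.InjOn (T^[S (k - 1)]) (D k) ∧
      T^[S (k - 1)] '' D k = D (k - 1) ∪ D (k + 1) ∧
      D (k - 1) ∩ D (k + 1) = {(0 : ℝ)} ∧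
      lam ^ S (k - 1) * intervalLength (D k)
        = intervalLength (D (k - 1)) + intervalLength (D (k + 1)) ∧
      lam ^ S (k - 1)
        = intervalLength (D (k - 1)) / intervalLength (D k)
          + 1 / (intervalLength (D k) / intervalLength (D (k + 1))) := by
  intro k hk
  have hlam0 : (0:ℝ) < lam := lt_trans one_pos hlam1
  have hc0 : c 0 = 0 := by rw [hc 0]; simp
  -- S is ≥ 1 for arguments ≥ -1
  have hSpos : ∀ m : ℤ, -1 ≤ m → 1 ≤ S m := by
    intro m hm
    refine Int.le_induction (motive := fun m _ => 1 ≤ S m) (le_of_eq hSm1.symm) (fun n hn ih => ?_) m hm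
    have h := hSrec (n + 1) (by omega)
    rw [show n + 1 - 1 = n from by ring] at h
    omega
  -- c of a shifted index
  have hcshift : ∀ i j : ℕ, T^[j] (c i) = c (i + j) := by
    intro i j
    rw [hc i, hc (i + j), Nat.add_comm i j, Function.iterate_add_apply]
  -- the key affinity claim
  have key : ∀ j : ℕ, j ≤ S (k - 1) → ∃ s : ℝ, |s| = lam ^ j ∧
      ∀ x ∈ Set.uIcc (0:ℝ) (c (S k)), T^[j] x = c j + s * x := by
    intro j
    induction j with
    | zero =>
      intro _
      exact ⟨1, by simp, fun x _ => by simp [hc0]⟩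
    | succ j ih =>
      intro hj1
      obtain ⟨s, hs, hfx⟩ := ih (Nat.le_of_succ_le hj1)
      have hq : c j + s * c (S k) = c (S k + j) := by
        have h := hfx (c (S k)) right_mem_uIcc
        rw [hcshift (S k) j] at h
        exact h.symm
      -- both endpoints on one side
      have hsides : (0 ≤ c j ∧ 0 ≤ c (S k + j)) ∨ (c j ≤ 0 ∧ c (S k + j) ≤ 0) := by
        rcases Nat.eq_zero_or_pos j with hj0 | hjpos
        · subst hj0
          rcases le_total 0 (c (S k + 0)) with h | h
          · exact Or.inl ⟨le_of_eq hc0.symm, h⟩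
          · exact Or.inr ⟨le_of_eq hc0, h⟩
        · have hsame' := hsame (k + 1) (by omega) j hjpos
            (by rw [show k + 1 - 2 = k - 1 from by ring]; omega)
          rw [show k + 1 - 1 = k from by ring] at hsame'
          have hjne : c j ≠ 0 := hcne j hjpos
          have hjne2 : c (S k + j) ≠ 0 := hcne _ (by omega)
          rcases lt_or_gt_of_ne hjne with h | h
          · exact Or.inr ⟨h.le, le_of_not_gt fun hh => (hsame'.mp hh).not_gt h⟩
          · exact Or.inl ⟨h.le, (hsame'.mpr h).le⟩
      rcases hsides with ⟨h0, h1⟩ | ⟨h0, h1⟩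
      · refine ⟨-lam * s, ?_, ?_⟩
        · rw [abs_mul, abs_neg, abs_of_pos hlam0, hs, pow_succ, mul_comm]
        · intro x hx
          have hy : 0 ≤ c j + s * x := betw_aux s x (c (S k)) (c j) hx h0 (hq ▸ h1)
          have hcj1 : c (j + 1) = lam * (1 - c j) - 1 := by
            rw [hc (j + 1), Function.iterate_succ_apply', ← hc j, hT, abs_of_nonneg h0]
          rw [Function.iterate_succ_apply', hfx x hx, hT, abs_of_nonneg hy, hcj1]
          ring
      · refine ⟨lam * s, ?_, ?_⟩
        · rw [abs_mul, abs_of_pos hlam0, hs, pow_succ, mul_comm]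
        · intro x hx
          have hy : c j + s * x ≤ 0 := betw_aux' s x (c (S k)) (c j) hx h0 (hq ▸ h1)
          have hcj1 : c (j + 1) = lam * (1 + c j) - 1 := by
            rw [hc (j + 1), Function.iterate_succ_apply', ← hc j, hT, abs_of_nonpos h0]
            ring
          rw [Function.iterate_succ_apply', hfx x hx, hT, abs_of_nonpos hy, hcj1]
          ring
  obtain ⟨s, hs, hfx⟩ := key (S (k - 1)) le_rfl
  set N := S (k - 1) with hN
  have hspos : 0 < |s| := by rw [hs]; positivity
  have hsne : s ≠ 0 := fun h => by simp [h] at hspos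
  have hS1 : S (k + 1) = S k + S (k - 1) := by
    have h := hSrec (k + 1) (by omega)
    rw [show k + 1 - 1 = k from by ring, show k + 1 - 2 = k - 1 from by ring] at h
    omega
  set a := c (S (k - 1)) with ha
  set b := c (S (k + 1)) with hb
  have hq : a + s * c (S k) = b := by
    have h := hfx (c (S k)) right_mem_uIcc
    rw [hcshift (S k) N] at h
    rw [hb, hS1]
    exact h.symm
  have hane : a ≠ 0 := hcne _ (hSpos (k - 1) (by omega))
  have hbne : b ≠ 0 := hcne _ (hSpos (k + 1) (by omega))
  have htne : c (S k) ≠ 0 := hcne _ (hSpos k (by omega))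
  have hoppo : (0 < b ↔ a < 0) := by
    have h := hopp (k + 1) (by omega)
    rw [show k + 1 - 2 = k - 1 from by ring] at h
    exact h
  -- opposite signs
  have hsigns : (a < 0 ∧ 0 < b) ∨ (b < 0 ∧ 0 < a) := by
    rcases lt_or_gt_of_ne hane with h | h
    · exact Or.inl ⟨h, hoppo.mpr h⟩
    · exact Or.inr ⟨lt_of_le_of_ne (le_of_not_gt fun hh => (hoppo.mp hh).not_gt h) hbne, h⟩
  -- image computation
  have himage : T^[N] '' Set.uIcc (0:ℝ) (c (S k)) = Set.uIcc a b := by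
    rw [Set.image_congr hfx]
    have : (fun x => a + s * x) = (fun x => a + x) ∘ (fun x => s * x) := rfl
    rw [this, Set.image_comp, Set.image_const_mul_uIcc, Set.image_const_add_uIcc,
      mul_zero, add_zero, hq]
  have hlen : ∀ x : ℝ, intervalLength (Set.uIcc 0 x) = |x| := by
    intro x
    rw [intervalLength, Real.volume_interval, ENNReal.toReal_ofReal (abs_nonneg _)]
    simp
  -- union and intersection, depending on sign case
  have hmain : Set.uIcc a b = Set.uIcc 0 a ∪ Set.uIcc 0 b ∧
      Set.uIcc (0:ℝ) a ∩ Set.uIcc 0 b = {(0:ℝ)} ∧ |b - a| = |a| + |b| := by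
    rcases hsigns with ⟨haneg, hbpos⟩ | ⟨hbneg, hapos⟩
    · refine ⟨?_, ?_, ?_⟩
      · rw [Set.uIcc_of_le (by linarith), Set.uIcc_of_ge haneg.le,
          Set.uIcc_of_le hbpos.le, Set.Icc_union_Icc_eq_Icc haneg.le hbpos.le]
      · rw [Set.uIcc_of_ge haneg.le, Set.uIcc_of_le hbpos.le, Set.Icc_inter_Icc,
          max_eq_right haneg.le, min_eq_left hbpos.le,
          Set.Icc_self]
      · rw [abs_of_pos (by linarith), abs_of_neg haneg, abs_of_pos hbpos]; ring
    · refine ⟨?_, ?_, ?_⟩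
      · rw [Set.uIcc_comm a b, Set.uIcc_of_le (by linarith), Set.uIcc_of_le hapos.le,
          Set.uIcc_of_ge hbneg.le, Set.union_comm,
          Set.Icc_union_Icc_eq_Icc hbneg.le hapos.le]
      · rw [Set.uIcc_of_le hapos.le, Set.uIcc_of_ge hbneg.le, Set.Icc_inter_Icc,
          max_eq_left hbneg.le, min_eq_right hapos.le,
          Set.Icc_self]
      · rw [abs_of_neg (by linarith), abs_of_pos hapos, abs_of_neg hbneg]; ring
  obtain ⟨hunion, hinter, habs⟩ := hmain
  have hba : b - a = s * c (S k) := by linarith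
  have hlenid : lam ^ N * |c (S k)| = |a| + |b| := by
    have : |b - a| = |s| * |c (S k)| := by rw [hba, abs_mul]
    rw [hs] at this
    linarith [habs, this]
  refine ⟨?_, ?_, ?_, ?_, ?_⟩
  · intro x hx y hy h
    rw [hDdef] at hx hy
    rw [hfx x hx, hfx y hy] at h
    have h2 : s * x = s * y := by linarith
    exact mul_left_cancel₀ hsne h2
  · rw [hDdef, hDdef, hDdef, himage, hunion, ← ha, ← hb]
  · rw [hDdef, hDdef, ← ha, ← hb, hinter]
  · rw [hDdef, hDdef, hDdef, hlen, hlen, hlen, ← ha, ← hb]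
    exact hlenid
  · rw [hDdef, hDdef, hDdef, hlen, hlen, hlen, ← ha, ← hb, one_div_div]
    have h1 : |c (S k)| ≠ 0 := abs_ne_zero.mpr htne
    field_simp
    linarith [hlenid]
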